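/- (Loops in the looptree.) Fix s ∈ [0,1] with Δ_s > 0, and for u ∈ [0, Δ_s] define s_u = inf{ t ∈ [s,1] : f(t) ≤ f(s) − u } (this infimum is over a nonempty set since f(1) = 0 ≤ f(s) − u, and f(s_u) = f(s) − u). Then for all u, u' ∈ [0, Δ_s], d(s_u, s_{u'}) = min(|u − u'|, Δ_s − |u − u'|); in other words, the set {s_u : u ∈ [0, Δ_s]} equipped with d is isometric to a metric circle of length Δ_s. -/
import Mathlib


open Set Filter

/-- The infimum `I_s^t` of `f` over the interval `[s, t]`. -/
noncomputable def infIcc (f : ℝ → ℝ) (s t : ℝ) : ℝ := sInf (f '' Set.Icc s t)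

/-- The genealogical relation `s ≼ t` associated with the excursion-type function `f`,
where `fl` is the left-limit function of `f` (with the convention `fl 0 = 0`):
`s ≼ t ↔ s ≤ t ∧ f(s-) ≤ I_s^t`. -/
def Prec (f fl : ℝ → ℝ) (s t : ℝ) : Prop := s ≤ t ∧ fl s ≤ infIcc f s t

/-- The jump `Δ_t = f(t) - f(t-)` of `f` at `t` (with the convention `fl 0 = 0`
this gives `Δ_0 = 0` for `f 0 = 0`). -/
def jump (f fl : ℝ → ℝ) (t : ℝ) : ℝ := f t - fl t

/-- The position `x_s^t = I_s^t - f(s-)` of the ancestral line of `t` in the loop at `s`. -/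
noncomputable def xpos (f fl : ℝ → ℝ) (s t : ℝ) : ℝ := infIcc f s t - fl s

/-- Distance on the cycle of length `D`: `δ_D(a,b) = min (|a-b|, D - |a-b|)`. -/
def cycleDist (D a b : ℝ) : ℝ := min |a - b| (D - |a - b|)

/-- `d₀(s,t) = ∑_{s ≺ r ≼ t} δ_{Δ_r}(0, x_r^t)`. -/
noncomputable def dZero (f fl : ℝ → ℝ) (s t : ℝ) : ℝ :=
  ∑' r : {r : ℝ // Prec f fl s r ∧ s ≠ r ∧ Prec f fl r t},
    cycleDist (jump f fl r.1) 0 (xpos f fl r.1 t)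

/-- The most recent common ancestor `s ∧ t` of `s` and `t`: the greatest common
`≼`-lower bound of `s` and `t` in `[0,1]`, realized as the supremum of the set of
common lower bounds. -/
noncomputable def mca (f fl : ℝ → ℝ) (s t : ℝ) : ℝ :=
  sSup {r : ℝ | r ∈ Set.Icc (0:ℝ) 1 ∧ Prec f fl r s ∧ Prec f fl r t}

/-- The looptree pseudo-distance
`d(s,t) = δ_{Δ_{s∧t}}(x_{s∧t}^s, x_{s∧t}^t) + d₀(s∧t, s) + d₀(s∧t, t)`. -/
noncomputable def looptreeDist (f fl : ℝ → ℝ) (s t : ℝ) : ℝ :=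
  cycleDist (jump f fl (mca f fl s t)) (xpos f fl (mca f fl s t) s) (xpos f fl (mca f fl s t) t)
    + dZero f fl (mca f fl s t) s + dZero f fl (mca f fl s t) t

/-- For u ∈ [0, Δ_s], the point `s_u = inf {t ∈ [s,1] : f t ≤ f s - u}`. -/
noncomputable def loopPoint (f : ℝ → ℝ) (s u : ℝ) : ℝ :=
  sInf {t : ℝ | t ∈ Set.Icc s 1 ∧ f t ≤ f s - u}

open Set Filter

lemma infIcc_eq_of (f : ℝ → ℝ) {a b c : ℝ} (hab : a ≤ b) (hfb : f b = c)
    (hall : ∀ t, a ≤ t → t ≤ b → c ≤ f t) : infIcc f a b = c := by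
  unfold infIcc
  apply le_antisymm
  · rw [← hfb]
    exact csInf_le ⟨c, by rintro x ⟨t, ht, rfl⟩; exact hall t ht.1 ht.2⟩
      ⟨b, ⟨hab, le_refl b⟩, rfl⟩
  · exact le_csInf ⟨f b, b, ⟨hab, le_refl b⟩, rfl⟩
      (by rintro x ⟨t, ht, rfl⟩; exact hall t ht.1 ht.2)

lemma infIcc_self (f : ℝ → ℝ) (a : ℝ) : infIcc f a a = f a := by
  unfold infIcc; rw [Set.Icc_self, Set.image_singleton, csInf_singleton]

lemma fl_nonneg (f fl : ℝ → ℝ)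
    (hf_left : ∀ t ∈ Set.Ioc (0:ℝ) 1, Filter.Tendsto f (nhdsWithin t (Set.Iio t)) (nhds (fl t)))
    (hfl0 : fl 0 = 0)
    (hf_nonneg : ∀ t ∈ Set.Icc (0:ℝ) 1, 0 ≤ f t)
    {s : ℝ} (hs : s ∈ Set.Icc (0:ℝ) 1) : 0 ≤ fl s := by
  rcases eq_or_lt_of_le hs.1 with h0 | h0
  · rw [← h0, hfl0]
  · refine ge_of_tendsto (hf_left s ⟨h0, hs.2⟩) ?_
    filter_upwards [eventually_mem_nhdsWithin,
      (eventually_gt_nhds h0).filter_mono nhdsWithin_le_nhds] with t ht h0t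
    exact hf_nonneg t ⟨le_of_lt h0t, le_trans (le_of_lt ht) hs.2⟩

section Main

variable (f fl : ℝ → ℝ)
variable
    (hf_right : ∀ t ∈ Set.Ico (0:ℝ) 1, Filter.Tendsto f (nhdsWithin t (Set.Ici t)) (nhds (f t)))
    (hf_left : ∀ t ∈ Set.Ioc (0:ℝ) 1, Filter.Tendsto f (nhdsWithin t (Set.Iio t)) (nhds (fl t)))
    (hfl0 : fl 0 = 0)
    (hf_nonneg : ∀ t ∈ Set.Icc (0:ℝ) 1, 0 ≤ f t)
    (hf_jump : ∀ t ∈ Set.Icc (0:ℝ) 1, fl t ≤ f t)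
    (hf0 : f 0 = 0) (hf1 : f 1 = 0)
    (s : ℝ) (hs : s ∈ Set.Icc (0:ℝ) 1) (hΔ : 0 < jump f fl s)

include hf_left hfl0 hf_nonneg in
lemma one_mem (u : ℝ) (hu : u ∈ Set.Icc (0:ℝ) (jump f fl s)) (hf1' : f 1 = 0)
    (hs : s ∈ Set.Icc (0:ℝ) 1) :
    (1:ℝ) ∈ {t : ℝ | t ∈ Set.Icc s 1 ∧ f t ≤ f s - u} := by
  have hfl : 0 ≤ fl s := fl_nonneg f fl hf_left hfl0 hf_nonneg hs
  have : 0 ≤ f s - u := by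
    have := hu.2
    simp only [jump] at this
    linarith
  exact ⟨⟨hs.2, le_refl 1⟩, by linarith [hf1']⟩

include hf_right hf_left hfl0 hf_nonneg hf_jump hf1 in
lemma loopPoint_basic (u : ℝ) (hu : u ∈ Set.Icc (0:ℝ) (jump f fl s))
    (hs : s ∈ Set.Icc (0:ℝ) 1) :
    (s ≤ loopPoint f s u ∧ loopPoint f s u ≤ 1) ∧
    (∀ t, s ≤ t → t < loopPoint f s u → f s - u < f t) ∧
    f (loopPoint f s u) = f s - u := by
  set S : Set ℝ := {t : ℝ | t ∈ Set.Icc s 1 ∧ f t ≤ f s - u} with hS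
  have h1S : (1:ℝ) ∈ S := one_mem f fl hf_left hfl0 hf_nonneg s u hu hf1 hs
  have hSne : S.Nonempty := ⟨1, h1S⟩
  have hbdd : BddBelow S := ⟨s, fun t ht => ht.1.1⟩
  have hp : loopPoint f s u = sInf S := rfl
  have hsp : s ≤ loopPoint f s u := by rw [hp]; exact le_csInf hSne fun t ht => ht.1.1
  have hp1 : loopPoint f s u ≤ 1 := by rw [hp]; exact csInf_le hbdd h1S
  have hgt : ∀ t, s ≤ t → t < loopPoint f s u → f s - u < f t := by
    intro t hst htp
    by_contra h
    push_neg at h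
    have : t ∈ S := ⟨⟨hst, le_trans (le_of_lt htp) hp1⟩, h⟩
    exact absurd (csInf_le hbdd this) (not_le.mpr (hp ▸ htp))
  refine ⟨⟨hsp, hp1⟩, hgt, ?_⟩
  set p := loopPoint f s u with hpdef
  have hp01 : p ∈ Set.Icc (0:ℝ) 1 := ⟨le_trans hs.1 hsp, hp1⟩
  -- upper bound : f p ≤ f s - u
  have hub : f p ≤ f s - u := by
    rcases eq_or_lt_of_le hp1 with h1 | h1
    · rw [h1, hf1]
      have hfl : 0 ≤ fl s := fl_nonneg f fl hf_left hfl0 hf_nonneg hs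
      have := hu.2; simp only [jump] at this; linarith
    · have hcl : p ∈ closure S := hp ▸ csInf_mem_closure hSne hbdd
      have hne : (nhdsWithin p S).NeBot := mem_closure_iff_nhdsWithin_neBot.mp hcl
      have htend : Filter.Tendsto f (nhdsWithin p S) (nhds (f p)) :=
        (hf_right p ⟨hp01.1, h1⟩).mono_left
          (nhdsWithin_mono p (fun t ht => show t ∈ Set.Ici p from hp ▸ csInf_le hbdd ht))
      exact le_of_tendsto htend
          (eventually_mem_nhdsWithin.mono fun t ht => ht.2)
  -- lower bound : f s - u ≤ f p
  have hlb : f s - u ≤ f p := by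
    rcases eq_or_lt_of_le hsp with h1 | h1
    · rw [← h1]; linarith [hu.1]
    · have hfl_ge : f s - u ≤ fl p := by
        refine ge_of_tendsto (hf_left p ⟨lt_of_le_of_lt hs.1 h1, hp1⟩) ?_
        filter_upwards [eventually_mem_nhdsWithin,
          (eventually_gt_nhds h1).filter_mono nhdsWithin_le_nhds] with t ht hst
        exact le_of_lt (hgt t (le_of_lt hst) ht)
      linarith [hf_jump p hp01]
  linarith

include hf_left in
lemma fl_ge (u p : ℝ) (hs0 : 0 ≤ s) (hp1 : p ≤ 1)
    (hgt : ∀ t, s ≤ t → t < p → f s - u < f t)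
    {r : ℝ} (hsr : s < r) (hrp : r ≤ p) : f s - u ≤ fl r := by
  refine ge_of_tendsto (hf_left r ⟨lt_of_le_of_lt hs0 hsr, le_trans hrp hp1⟩) ?_
  filter_upwards [eventually_mem_nhdsWithin,
    (eventually_gt_nhds hsr).filter_mono nhdsWithin_le_nhds] with t ht hst
  exact le_of_lt (hgt t (le_of_lt hst) (lt_of_lt_of_le ht hrp))

lemma infIcc_rp (u p : ℝ)
    (hgt : ∀ t, s ≤ t → t < p → f s - u < f t) (hfp : f p = f s - u)
    {r : ℝ} (hsr : s ≤ r) (hrp : r ≤ p) : infIcc f r p = f s - u := by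
  refine infIcc_eq_of f hrp hfp fun t hrt htp => ?_
  rcases eq_or_lt_of_le htp with h | h
  · rw [h, hfp]
  · exact le_of_lt (hgt t (le_trans hsr hrt) h)

include hf_right hf_left hfl0 hf_nonneg hf_jump hf1 in
lemma dZero_s_loopPoint (u : ℝ) (hu : u ∈ Set.Icc (0:ℝ) (jump f fl s))
    (hs : s ∈ Set.Icc (0:ℝ) 1) :
    dZero f fl s (loopPoint f s u) = 0 := by
  obtain ⟨⟨hsp, hp1⟩, hgt, hfp⟩ :=
    loopPoint_basic f fl hf_right hf_left hfl0 hf_nonneg hf_jump hf1 s u hu hs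
  set p := loopPoint f s u with hpdef
  unfold dZero
  have : ∀ r : {r : ℝ // Prec f fl s r ∧ s ≠ r ∧ Prec f fl r p},
      cycleDist (jump f fl r.1) 0 (xpos f fl r.1 p) = 0 := by
    rintro ⟨r, ⟨hsr', _⟩, hne, hrp', hflr⟩
    have hsr : s < r := lt_of_le_of_ne hsr' hne
    have hr01 : r ∈ Set.Icc (0:ℝ) 1 := ⟨le_trans hs.1 hsr', le_trans hrp' hp1⟩
    have hinf : infIcc f r p = f s - u := infIcc_rp f s u p hgt hfp hsr' hrp'
    have hflge : f s - u ≤ fl r := fl_ge f fl hf_left s u p hs.1 hp1 hgt hsr hrp'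
    have hflr' : fl r = f s - u := le_antisymm (hinf ▸ hflr) hflge
    have hx : xpos f fl r p = 0 := by
      unfold xpos; rw [hinf, hflr']; ring
    have hjnn : 0 ≤ jump f fl r := by
      have := hf_jump r hr01; unfold jump; linarith
    rw [hx]
    unfold cycleDist
    simp [hjnn]
  rw [tsum_congr this, tsum_zero]

include hf_right hf_left hfl0 hf_nonneg hf_jump hf1 in
lemma prec_s_loopPoint (u : ℝ) (hu : u ∈ Set.Icc (0:ℝ) (jump f fl s))
    (hs : s ∈ Set.Icc (0:ℝ) 1) :
    Prec f fl s (loopPoint f s u) ∧ infIcc f s (loopPoint f s u) = f s - u := by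
  obtain ⟨⟨hsp, hp1⟩, hgt, hfp⟩ :=
    loopPoint_basic f fl hf_right hf_left hfl0 hf_nonneg hf_jump hf1 s u hu hs
  have hinf : infIcc f s (loopPoint f s u) = f s - u :=
    infIcc_rp f s u _ hgt hfp (le_refl s) hsp
  refine ⟨⟨hsp, ?_⟩, hinf⟩
  rw [hinf]
  have := hu.2; unfold jump at this; linarith

include hf_right hf_left hfl0 hf_nonneg hf_jump hf1 in
lemma mca_loopPoints (u u' : ℝ) (hu : u ∈ Set.Icc (0:ℝ) (jump f fl s))
    (hu' : u' ∈ Set.Icc (0:ℝ) (jump f fl s)) (hle : u ≤ u') (hne : u ≠ u')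
    (hs : s ∈ Set.Icc (0:ℝ) 1) :
    mca f fl (loopPoint f s u) (loopPoint f s u') = s := by
  obtain ⟨⟨hsp, hp1⟩, hgt, hfp⟩ :=
    loopPoint_basic f fl hf_right hf_left hfl0 hf_nonneg hf_jump hf1 s u hu hs
  obtain ⟨⟨hsp', hp1'⟩, hgt', hfp'⟩ :=
    loopPoint_basic f fl hf_right hf_left hfl0 hf_nonneg hf_jump hf1 s u' hu' hs
  have hprec := prec_s_loopPoint f fl hf_right hf_left hfl0 hf_nonneg hf_jump hf1 s u hu hs
  have hprec' := prec_s_loopPoint f fl hf_right hf_left hfl0 hf_nonneg hf_jump hf1 s u' hu' hs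
  apply IsGreatest.csSup_eq
  constructor
  · exact ⟨hs, hprec.1, hprec'.1⟩
  · rintro r ⟨hr01, ⟨hrpu, hflru⟩, ⟨hrpu', hflru'⟩⟩
    by_contra hc
    push_neg at hc
    have hflge : f s - u ≤ fl r := fl_ge f fl hf_left s u _ hs.1 hp1 hgt hc hrpu
    have hble : fl r ≤ f (loopPoint f s u') := by
      refine le_trans hflru' (csInf_le ⟨0, ?_⟩ ⟨loopPoint f s u', ⟨hrpu', le_refl _⟩, rfl⟩)
      rintro x ⟨t, ht, rfl⟩
      exact hf_nonneg t ⟨le_trans hr01.1 ht.1, le_trans ht.2 hp1'⟩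
    rw [hfp'] at hble
    have : u' ≤ u := by linarith
    exact hne (le_antisymm hle this)

lemma mca_self (t : ℝ) (ht01 : t ∈ Set.Icc (0:ℝ) 1) (hjt : fl t ≤ f t) :
    mca f fl t t = t := by
  apply IsGreatest.csSup_eq
  constructor
  · have : Prec f fl t t := ⟨le_refl t, by rw [infIcc_self]; exact hjt⟩
    exact ⟨ht01, this, this⟩
  · rintro r ⟨_, ⟨hrt, _⟩, _⟩
    exact hrt

lemma dZero_self (t : ℝ) : dZero f fl t t = 0 := by
  unfold dZero
  have : IsEmpty {r : ℝ // Prec f fl t r ∧ t ≠ r ∧ Prec f fl r t} := by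
    refine ⟨?_⟩
    rintro ⟨r, ⟨htr, _⟩, hne, ⟨hrt, _⟩⟩
    exact hne (le_antisymm htr hrt)
  exact tsum_empty

lemma looptreeDist_self (t : ℝ) (ht01 : t ∈ Set.Icc (0:ℝ) 1) (hjt : fl t ≤ f t) :
    looptreeDist f fl t t = 0 := by
  unfold looptreeDist
  rw [mca_self f fl t ht01 hjt, dZero_self, cycleDist]
  have : 0 ≤ jump f fl t := by unfold jump; linarith
  simp [this]

lemma looptreeDist_comm (a b : ℝ) : looptreeDist f fl a b = looptreeDist f fl b a := by
  have hm : mca f fl a b = mca f fl b a := by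
    unfold mca
    congr 1
    ext r
    simp only [Set.mem_setOf_eq]
    tauto
  unfold looptreeDist cycleDist
  rw [hm, abs_sub_comm (xpos f fl (mca f fl b a) a)]
  ring

include hf_right hf_left hfl0 hf_nonneg hf_jump hf1 in
lemma dist_loopPoints (u u' : ℝ) (hu : u ∈ Set.Icc (0:ℝ) (jump f fl s))
    (hu' : u' ∈ Set.Icc (0:ℝ) (jump f fl s)) (hle : u ≤ u') (hne : u ≠ u')
    (hs : s ∈ Set.Icc (0:ℝ) 1) :
    looptreeDist f fl (loopPoint f s u) (loopPoint f s u')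
      = min |u - u'| (jump f fl s - |u - u'|) := by
  have hprec := prec_s_loopPoint f fl hf_right hf_left hfl0 hf_nonneg hf_jump hf1 s u hu hs
  have hprec' := prec_s_loopPoint f fl hf_right hf_left hfl0 hf_nonneg hf_jump hf1 s u' hu' hs
  have hmca := mca_loopPoints f fl hf_right hf_left hfl0 hf_nonneg hf_jump hf1 s u u' hu hu' hle hne hs
  have hd0 := dZero_s_loopPoint f fl hf_right hf_left hfl0 hf_nonneg hf_jump hf1 s u hu hs
  have hd0' := dZero_s_loopPoint f fl hf_right hf_left hfl0 hf_nonneg hf_jump hf1 s u' hu' hs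
  unfold looptreeDist
  rw [hmca, hd0, hd0']
  have hx : xpos f fl s (loopPoint f s u) = jump f fl s - u := by
    unfold xpos; rw [hprec.2]; unfold jump; ring
  have hx' : xpos f fl s (loopPoint f s u') = jump f fl s - u' := by
    unfold xpos; rw [hprec'.2]; unfold jump; ring
  rw [hx, hx']
  unfold cycleDist
  have : jump f fl s - u - (jump f fl s - u') = -(u - u') := by ring
  rw [this, abs_neg]
  ring_nf

end Main

theorem looptree_loops (f fl : ℝ → ℝ)
    (hf_right : ∀ t ∈ Set.Ico (0:ℝ) 1, Filter.Tendsto f (nhdsWithin t (Set.Ici t)) (nhds (f t)))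
    (hf_left : ∀ t ∈ Set.Ioc (0:ℝ) 1, Filter.Tendsto f (nhdsWithin t (Set.Iio t)) (nhds (fl t)))
    (hfl0 : fl 0 = 0)
    (hf_nonneg : ∀ t ∈ Set.Icc (0:ℝ) 1, 0 ≤ f t)
    (hf_jump : ∀ t ∈ Set.Icc (0:ℝ) 1, fl t ≤ f t)
    (hf0 : f 0 = 0) (hf1 : f 1 = 0)
    (s : ℝ) (hs : s ∈ Set.Icc (0:ℝ) 1) (hΔ : 0 < jump f fl s) :
    ∀ u ∈ Set.Icc (0:ℝ) (jump f fl s), ∀ u' ∈ Set.Icc (0:ℝ) (jump f fl s),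
      {t : ℝ | t ∈ Set.Icc s 1 ∧ f t ≤ f s - u}.Nonempty ∧
      f (loopPoint f s u) = f s - u ∧
      looptreeDist f fl (loopPoint f s u) (loopPoint f s u')
        = min |u - u'| (jump f fl s - |u - u'|) := by
  intro u hu u' hu'
  obtain ⟨⟨hsp, hp1⟩, hgt, hfp⟩ :=
    loopPoint_basic f fl hf_right hf_left hfl0 hf_nonneg hf_jump hf1 s u hu hs
  refine ⟨⟨1, one_mem f fl hf_left hfl0 hf_nonneg s u hu hf1 hs⟩, hfp, ?_⟩
  rcases eq_or_ne u u' with rfl | hne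
  · have ht01 : loopPoint f s u ∈ Set.Icc (0:ℝ) 1 := ⟨le_trans hs.1 hsp, hp1⟩
    rw [looptreeDist_self f fl _ ht01 (hf_jump _ ht01), sub_self, abs_zero, sub_zero]
    exact (min_eq_left (le_of_lt hΔ)).symm
  · rcases le_total u u' with h | h
    · exact dist_loopPoints f fl hf_right hf_left hfl0 hf_nonneg hf_jump hf1 s u u' hu hu' h hne hs
    · rw [looptreeDist_comm, abs_sub_comm]
      exact dist_loopPoints f fl hf_right hf_left hfl0 hf_nonneg hf_jump hf1 s u' u hu' hu h
        (Ne.symm hne) hs
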